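/- Let n ≥ 1, let s_1, ..., s_n be pairwise distinct complex numbers, and let x_{ji} ∈ ℂ be arbitrary for all 1 ≤ i < j ≤ n. Define the n×n lower unitriangular matrix M by M_{ii} = 1, M_{ji} = 0 for i > j, and for i < j, M_{ji} = ∑_{i = i_1 < i_2 < ... < i_k = j} c(i_1,...,i_k) ∏_{l=1}^{k−1} x_{i_{l+1} i_l}, where the sum ranges over all strictly increasing chains from i to j and c(i_1,...,i_k) = ∏_{l=1}^{k−1} (s_{i_l} − s_{i_{l+1}})/(s_{i_l} − s_{i_k}). Define N the same way with c replaced by c'(i_1,...,i_k) = (−1)^{k−1} ∏_{l=1}^{k−1} (s_{i_l} − s_{i_{l+1}})/(s_{i_1} − s_{i_{l+1}}). Then N · M is the identity matrix; in particular M is invertible with M^{−1} = N. -/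

import Mathlib

open Finset

/-- The product of `f a b` over consecutive pairs `(a, b)` of the list `L`
(the empty product being `1`). -/
def consecPairsProd {α : Type*} (f : α → α → ℂ) (L : List α) : ℂ :=
  ((L.zip L.tail).map fun p => f p.1 p.2).prod

/-- The sum over all strictly increasing chains `i = i_1 < i_2 < ... < i_k = j` in `Fin n`
(equivalently, over all subsets `T` of the open interval `(i, j)`, the chain being the sorted
list of `{i} ∪ T ∪ {j}`) of the product of `f` over consecutive pairs of the chain. -/
noncomputable def chainSum {n : ℕ} (f : Fin n → Fin n → ℂ) (i j : Fin n) : ℂ :=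
  ∑ T ∈ (Finset.Ioo i j).powerset,
    consecPairsProd f ((insert i (insert j T)).sort (· ≤ ·))

/-- The lower unitriangular matrix `M` of the paper (Appendix B.2), with entry in row `j`,
column `i` (for `i < j`) given by
`M_{ji} = ∑_{i = i_1 < ... < i_k = j} c(i_1,...,i_k) ∏_{l=1}^{k−1} x_{i_{l+1} i_l}`,
where `c(i_1,...,i_k) = ∏_{l=1}^{k−1} (s_{i_l} − s_{i_{l+1}})/(s_{i_l} − s_{i_k})`. -/
noncomputable def Mmat (n : ℕ) (s : Fin n → ℂ) (x : Fin n → Fin n → ℂ) :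
    Matrix (Fin n) (Fin n) ℂ :=
  Matrix.of fun j i =>
    if i = j then 1
    else if i < j then chainSum (fun a b => (s a - s b) / (s a - s j) * x b a) i j
    else 0

/-- The lower unitriangular matrix `N` defined as `M` but with `c` replaced by
`c'(i_1,...,i_k) = (−1)^{k−1} ∏_{l=1}^{k−1} (s_{i_l} − s_{i_{l+1}})/(s_{i_1} − s_{i_{l+1}})`. -/
noncomputable def Nmat (n : ℕ) (s : Fin n → ℂ) (x : Fin n → Fin n → ℂ) :
    Matrix (Fin n) (Fin n) ℂ :=
  Matrix.of fun j i =>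
    if i = j then 1
    else if i < j then chainSum (fun a b => -((s a - s b) / (s i - s b)) * x b a) i j
    else 0


open Polynomial

theorem lagrange_core {ι : Type*} [DecidableEq ι] (s : Finset ι) (v : ι → ℂ) (hvs : Set.InjOn v s)
    (hcard : 2 ≤ s.card) : ∑ i ∈ s, Lagrange.nodalWeight s v i = 0 := by
  have h := Lagrange.sum_basis hvs (Finset.card_pos.mp (by omega))
  have h2 := congrArg (fun p => Polynomial.coeff p (s.card - 1)) h
  simp only [Polynomial.finset_sum_coeff] at h2
  rw [Polynomial.coeff_one, if_neg (by omega)] at h2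
  rw [← h2]
  refine Finset.sum_congr rfl fun i hi => ?_
  rw [← Lagrange.natDegree_basis hvs hi, ← Polynomial.leadingCoeff]
  rw [Lagrange.basis, Polynomial.leadingCoeff_prod, Lagrange.nodalWeight]
  refine Finset.prod_congr rfl fun j hj => ?_
  rw [Lagrange.basisDivisor, Polynomial.leadingCoeff_mul, Polynomial.leadingCoeff_C,
    (Polynomial.monic_X_sub_C (v j)).leadingCoeff, mul_one]


@[simp] lemma cpp_nil {α : Type*} (f : α → α → ℂ) : consecPairsProd f [] = 1 := rfl
@[simp] lemma cpp_single {α : Type*} (f : α → α → ℂ) (a : α) : consecPairsProd f [a] = 1 := rfl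

lemma cpp_cons_cons {α : Type*} (f : α → α → ℂ) (a b : α) (l : List α) :
    consecPairsProd f (a :: b :: l) = f a b * consecPairsProd f (b :: l) := rfl

lemma cpp_split {α : Type*} (f : α → α → ℂ) (A C : List α) (b : α) :
    consecPairsProd f (A ++ b :: C) = consecPairsProd f (A ++ [b]) * consecPairsProd f (b :: C) := by
  induction A with
  | nil => simp
  | cons a A ih =>
    cases A with
    | nil => simp [cpp_cons_cons, mul_assoc]
    | cons a' A' =>
      simp only [List.cons_append, cpp_cons_cons] at *
      rw [ih, mul_assoc]

lemma cpp_mul {α : Type*} (f g : α → α → ℂ) (L : List α) :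
    consecPairsProd (fun a b => f a b * g a b) L = consecPairsProd f L * consecPairsProd g L := by
  simp [consecPairsProd, List.prod_map_mul]

lemma cpp_congr {α : Type*} {f g : α → α → ℂ} (L : List α) (h : ∀ a b, f a b = g a b) :
    consecPairsProd f L = consecPairsProd g L := by
  simp only [consecPairsProd]; congr 1; exact List.map_congr_left fun p _ => h p.1 p.2

lemma cpp_fst {α : Type*} (u : α → ℂ) (A : List α) (r : α) :
    consecPairsProd (fun a _ => u a) (A ++ [r]) = (A.map u).prod := by
  induction A with
  | nil => simp
  | cons a A ih =>
    cases A with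
    | nil => simp [cpp_cons_cons]
    | cons a' A' => simp only [List.cons_append, cpp_cons_cons] at *; rw [ih]; simp [mul_assoc]

lemma cpp_snd {α : Type*} (w : α → ℂ) (B : List α) (r : α) :
    consecPairsProd (fun _ b => w b) (r :: B) = (B.map w).prod := by
  induction B generalizing r with
  | nil => simp
  | cons b B ih => rw [cpp_cons_cons, ih]; simp

variable {α : Type*} [LinearOrder α]

lemma filter_le_eq_insert (V : Finset α) (r : α) (hr : r ∈ V) :
    V.filter (fun x => r ≤ x) = insert r (V.filter (fun x => r < x)) := by
  ext a
  simp only [mem_filter, mem_insert]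
  constructor
  · rintro ⟨ha, hle⟩
    rcases hle.lt_or_eq with h | h
    · exact Or.inr ⟨ha, h⟩
    · exact Or.inl h.symm
  · rintro (rfl | ⟨ha, hlt⟩)
    · exact ⟨hr, le_refl _⟩
    · exact ⟨ha, hlt.le⟩

lemma sort_split (V : Finset α) (r : α) (hr : r ∈ V) :
    V.sort (· ≤ ·) =
      ((V.filter (fun x => x < r)).sort (· ≤ ·)) ++ r :: ((V.filter (fun x => r < x)).sort (· ≤ ·)) := by
  have hnotmem : r ∉ V.filter (fun x => r < x) := by simp
  have hperm : List.Perm (V.sort (· ≤ ·))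
      (((V.filter (fun x => x < r)).sort (· ≤ ·)) ++ r :: ((V.filter (fun x => r < x)).sort (· ≤ ·))) := by
    rw [← Multiset.coe_eq_coe]
    have hcoe : ((((V.filter (fun x => x < r)).sort (· ≤ ·)) ++
        r :: ((V.filter (fun x => r < x)).sort (· ≤ ·)) : List α) : Multiset α)
        = (V.filter (fun x => x < r)).val + r ::ₘ (V.filter (fun x => r < x)).val := by
      rw [← Multiset.coe_add, ← Multiset.cons_coe, Finset.sort_eq, Finset.sort_eq]
    rw [hcoe, Finset.sort_eq]
    have h1 : V.val = (V.filter (fun x => x < r)).val + (V.filter (fun x => r ≤ x)).val := by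
      conv_lhs => rw [← Multiset.filter_add_not (fun x => x < r) V.val]
      rw [Finset.filter_val, Finset.filter_val]
      congr 1
      exact Multiset.filter_congr fun x _ => by simp [not_lt]
    rw [h1, filter_le_eq_insert V r hr, Finset.insert_val_of_notMem hnotmem]
  refine List.Perm.eq_of_pairwise' (Finset.pairwise_sort _ _) ?_ hperm
  rw [List.pairwise_append]
  refine ⟨Finset.pairwise_sort _ _, ?_, ?_⟩
  · rw [List.pairwise_cons]
    exact ⟨fun b hb => ((Finset.mem_sort _).mp hb |> Finset.mem_filter.mp).2.le,
      Finset.pairwise_sort _ _⟩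
  · intro a ha b hb
    have ha' := ((Finset.mem_sort _).mp ha |> Finset.mem_filter.mp).2
    rcases List.mem_cons.mp hb with rfl | hb'
    · exact ha'.le
    · exact ha'.le.trans ((Finset.mem_sort _).mp hb' |> Finset.mem_filter.mp).2.le

lemma sort_filter_le (V : Finset α) (r : α) (hr : r ∈ V) :
    (V.filter (fun x => x ≤ r)).sort (· ≤ ·) = ((V.filter (fun x => x < r)).sort (· ≤ ·)) ++ [r] := by
  have hr' : r ∈ V.filter (fun x => x ≤ r) := mem_filter.mpr ⟨hr, le_refl r⟩
  have h := sort_split (V.filter (fun x => x ≤ r)) r hr'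
  rw [Finset.filter_filter, Finset.filter_filter] at h
  have e1 : V.filter (fun a => a ≤ r ∧ a < r) = V.filter (fun x => x < r) :=
    Finset.filter_congr fun a _ => by constructor <;> intro h' <;> [exact h'.2; exact ⟨h'.le, h'⟩]
  have e2 : V.filter (fun a => a ≤ r ∧ r < a) = ∅ := by
    rw [Finset.filter_eq_empty_iff]; rintro a - ⟨h1, h2⟩; exact absurd (h1.trans_lt h2) (lt_irrefl a)
  rw [e1, e2] at h
  simpa using h

lemma sort_filter_ge (V : Finset α) (r : α) (hr : r ∈ V) :
    (V.filter (fun x => r ≤ x)).sort (· ≤ ·) = r :: ((V.filter (fun x => r < x)).sort (· ≤ ·)) := by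
  have hr' : r ∈ V.filter (fun x => r ≤ x) := mem_filter.mpr ⟨hr, le_refl r⟩
  have h := sort_split (V.filter (fun x => r ≤ x)) r hr'
  rw [Finset.filter_filter, Finset.filter_filter] at h
  have e1 : V.filter (fun a => r ≤ a ∧ a < r) = ∅ := by
    rw [Finset.filter_eq_empty_iff]; rintro a - ⟨h1, h2⟩; exact absurd (h1.trans_lt h2) (lt_irrefl r)
  have e2 : V.filter (fun a => r ≤ a ∧ r < a) = V.filter (fun x => r < x) :=
    Finset.filter_congr fun a _ => by constructor <;> intro h' <;> [exact h'.2; exact ⟨h'.le, h'⟩]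
  rw [e1, e2] at h
  simpa using h

-- list prod over sort = finset prod
lemma sort_map_prod {α : Type*} [LinearOrder α] (F : Finset α) (u : α → ℂ) :
    ((F.sort (· ≤ ·)).map u).prod = ∏ a ∈ F, u a := by
  rw [Finset.prod_eq_multiset_prod, ← Finset.sort_eq F (· ≤ ·), Multiset.map_coe,
    Multiset.prod_coe]

lemma key {n : ℕ} (s : Fin n → ℂ) (hs : Function.Injective s) (x : Fin n → Fin n → ℂ)
    (V : Finset (Fin n)) (hV : 2 ≤ V.card) :
    ∑ r ∈ V, consecPairsProd (fun a b => -((s a - s b) / (s r - s b)) * x b a)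
        ((V.filter (fun v => r ≤ v)).sort (· ≤ ·)) *
      consecPairsProd (fun a b => (s a - s b) / (s a - s r) * x b a)
        ((V.filter (fun v => v ≤ r)).sort (· ≤ ·)) = 0 := by
  set w : Fin n → Fin n → ℂ := fun a b => (s a - s b) * x b a with hw
  have main : ∀ r ∈ V,
      consecPairsProd (fun a b => -((s a - s b) / (s r - s b)) * x b a)
          ((V.filter (fun v => r ≤ v)).sort (· ≤ ·)) *
        consecPairsProd (fun a b => (s a - s b) / (s a - s r) * x b a)
          ((V.filter (fun v => v ≤ r)).sort (· ≤ ·))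
      = (consecPairsProd w (V.sort (· ≤ ·)) * (-1 : ℂ) ^ (V.card - 1)) *
          Lagrange.nodalWeight V s r := by
    intro r hr
    rw [sort_filter_ge V r hr, sort_filter_le V r hr]
    set L₁ := (V.filter (fun x => x < r)).sort (· ≤ ·) with hL₁
    set L₂ := (V.filter (fun x => r < x)).sort (· ≤ ·) with hL₂
    have hf : consecPairsProd (fun a b => (s a - s b) / (s a - s r) * x b a) (L₁ ++ [r])
        = consecPairsProd w (L₁ ++ [r]) * (L₁.map (fun a => (s a - s r)⁻¹)).prod := by
      rw [← cpp_fst (fun a => (s a - s r)⁻¹) L₁ r, ← cpp_mul]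
      refine cpp_congr _ fun a b => ?_
      rw [div_eq_mul_inv]; ring
    have hg : consecPairsProd (fun a b => -((s a - s b) / (s r - s b)) * x b a) (r :: L₂)
        = consecPairsProd w (r :: L₂) * (L₂.map (fun b => (s b - s r)⁻¹)).prod := by
      rw [← cpp_snd (fun b => (s b - s r)⁻¹) L₂ r, ← cpp_mul]
      refine cpp_congr _ fun a b => ?_
      have h1 : (s b - s r)⁻¹ = -(s r - s b)⁻¹ := by
        rw [← inv_neg]; ring_nf
      rw [div_eq_mul_inv, h1]; ring
    rw [hf, hg]
    have hsplit : consecPairsProd w (L₁ ++ [r]) * consecPairsProd w (r :: L₂)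
        = consecPairsProd w (V.sort (· ≤ ·)) := by
      rw [sort_split V r hr]; exact (cpp_split w L₁ L₂ r).symm
    have hprod1 : (L₁.map (fun a => (s a - s r)⁻¹)).prod
        = ∏ a ∈ V.filter (fun x => x < r), (s a - s r)⁻¹ := sort_map_prod _ _
    have hprod2 : (L₂.map (fun b => (s b - s r)⁻¹)).prod
        = ∏ b ∈ V.filter (fun x => r < x), (s b - s r)⁻¹ := sort_map_prod _ _
    have he1 : (V.erase r).filter (fun x => x < r) = V.filter (fun x => x < r) := by
      ext a
      simp only [Finset.mem_filter, Finset.mem_erase]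
      exact ⟨fun h => ⟨h.1.2, h.2⟩, fun h => ⟨⟨h.2.ne, h.1⟩, h.2⟩⟩
    have he2 : (V.erase r).filter (fun x => ¬ x < r) = V.filter (fun x => r < x) := by
      ext a
      simp only [Finset.mem_filter, Finset.mem_erase, not_lt]
      exact ⟨fun h => ⟨h.1.2, lt_of_le_of_ne h.2 (Ne.symm h.1.1)⟩,
        fun h => ⟨⟨h.2.ne', h.1⟩, h.2.le⟩⟩
    have hmerge : (∏ a ∈ V.filter (fun x => x < r), (s a - s r)⁻¹) *
        (∏ b ∈ V.filter (fun x => r < x), (s b - s r)⁻¹)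
        = ∏ t ∈ V.erase r, (s t - s r)⁻¹ := by
      rw [← he1, ← he2, Finset.prod_filter_mul_prod_filter_not]
    have hsign : ∏ t ∈ V.erase r, (s t - s r)⁻¹
        = (-1 : ℂ) ^ (V.card - 1) * Lagrange.nodalWeight V s r := by
      rw [Lagrange.nodalWeight, ← Finset.card_erase_of_mem hr, ← Finset.prod_const,
        ← Finset.prod_mul_distrib]
      refine Finset.prod_congr rfl fun t _ => ?_
      rw [show s t - s r = -(s r - s t) by ring, inv_neg]; ring
    calc consecPairsProd w (r :: L₂) * (L₂.map fun b => (s b - s r)⁻¹).prod *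
          (consecPairsProd w (L₁ ++ [r]) * (L₁.map fun a => (s a - s r)⁻¹).prod)
        = (consecPairsProd w (L₁ ++ [r]) * consecPairsProd w (r :: L₂)) *
          ((L₁.map fun a => (s a - s r)⁻¹).prod * (L₂.map fun b => (s b - s r)⁻¹).prod) := by
          ring
      _ = consecPairsProd w (V.sort (· ≤ ·)) * ((-1 : ℂ) ^ (V.card - 1) *
            Lagrange.nodalWeight V s r) := by
          rw [hsplit, hprod1, hprod2, hmerge, hsign]
      _ = _ := by ring
  rw [Finset.sum_congr rfl main, ← Finset.mul_sum,
    lagrange_core V s (hs.injOn) hV, mul_zero]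

lemma chainSum_self {n : ℕ} (f : Fin n → Fin n → ℂ) (i : Fin n) : chainSum f i i = 1 := by
  simp [chainSum, Finset.Ioo_self, consecPairsProd]

lemma Nmat_apply (n : ℕ) (s : Fin n → ℂ) (x : Fin n → Fin n → ℂ) (j i : Fin n) :
    Nmat n s x j i =
      if i ≤ j then chainSum (fun a b => -((s a - s b) / (s i - s b)) * x b a) i j else 0 := by
  show (if i = j then 1 else if i < j then _ else 0) = _
  by_cases h : i = j
  · subst h; rw [if_pos rfl, if_pos le_rfl, chainSum_self]
  · rw [if_neg h]
    by_cases h2 : i < j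
    · rw [if_pos h2, if_pos h2.le]
    · rw [if_neg h2, if_neg (fun hle => h (le_antisymm hle (not_lt.mp h2)))]

lemma Mmat_apply (n : ℕ) (s : Fin n → ℂ) (x : Fin n → Fin n → ℂ) (j i : Fin n) :
    Mmat n s x j i =
      if i ≤ j then chainSum (fun a b => (s a - s b) / (s a - s j) * x b a) i j else 0 := by
  show (if i = j then 1 else if i < j then _ else 0) = _
  by_cases h : i = j
  · subst h; rw [if_pos rfl, if_pos le_rfl, chainSum_self]
  · rw [if_neg h]
    by_cases h2 : i < j
    · rw [if_pos h2, if_pos h2.le]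
    · rw [if_neg h2, if_neg (fun hle => h (le_antisymm hle (not_lt.mp h2)))]

theorem Nmat_mul_Mmat_eq_one (n : ℕ) (hn : 1 ≤ n) (s : Fin n → ℂ)
    (hs : Function.Injective s) (x : Fin n → Fin n → ℂ) :
    Nmat n s x * Mmat n s x = 1 := by
  ext j k
  rw [Matrix.mul_apply, Matrix.one_apply]
  have hterm : ∀ i : Fin n, Nmat n s x j i * Mmat n s x i k =
      if i ∈ Finset.Icc k j then
        chainSum (fun a b => -((s a - s b) / (s i - s b)) * x b a) i j *
          chainSum (fun a b => (s a - s b) / (s a - s i) * x b a) k i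
      else 0 := by
    intro i
    rw [Nmat_apply, Mmat_apply]
    by_cases h1 : i ≤ j <;> by_cases h2 : k ≤ i <;>
      simp [Finset.mem_Icc, h1, h2]
  rw [Finset.sum_congr rfl fun i _ => hterm i, Finset.sum_ite_mem, Finset.univ_inter]
  by_cases hjk : j = k
  · subst hjk
    simp [Finset.Icc_self, chainSum_self]
  · rw [if_neg hjk]
    by_cases hkj : k < j
    swap
    · have : Finset.Icc k j = ∅ :=
        Finset.Icc_eq_empty fun hle => hjk (le_antisymm (not_lt.mp hkj) hle)
      rw [this, Finset.sum_empty]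
    -- main case
    have expand : ∀ i : Fin n,
        chainSum (fun a b => -((s a - s b) / (s i - s b)) * x b a) i j *
          chainSum (fun a b => (s a - s b) / (s a - s i) * x b a) k i
        = ∑ p ∈ (Finset.Ioo i j).powerset ×ˢ (Finset.Ioo k i).powerset,
            consecPairsProd (fun a b => -((s a - s b) / (s i - s b)) * x b a)
              ((insert i (insert j p.1)).sort (· ≤ ·)) *
            consecPairsProd (fun a b => (s a - s b) / (s a - s i) * x b a)
              ((insert k (insert i p.2)).sort (· ≤ ·)) := by
      intro i
      rw [chainSum, chainSum, Finset.sum_mul_sum, Finset.sum_product]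
    rw [Finset.sum_congr rfl fun i _ => expand i]
    have hzero : ∑ U ∈ (Finset.Ioo k j).powerset, ∑ r ∈ insert k (insert j U),
        consecPairsProd (fun a b => -((s a - s b) / (s r - s b)) * x b a)
          (((insert k (insert j U)).filter (fun v => r ≤ v)).sort (· ≤ ·)) *
        consecPairsProd (fun a b => (s a - s b) / (s a - s r) * x b a)
          (((insert k (insert j U)).filter (fun v => v ≤ r)).sort (· ≤ ·)) = 0 := by
      refine Finset.sum_eq_zero fun U hU => ?_
      exact key s hs x (insert k (insert j U))
        (Finset.one_lt_card.mpr ⟨k, by simp, j, by simp, ne_of_lt hkj⟩)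
    rw [← hzero, Finset.sum_sigma' (Finset.Icc k j), Finset.sum_sigma' ((Finset.Ioo k j).powerset)]
    refine Finset.sum_nbij'
      (fun q => ⟨insert q.1 (q.2.2 ∪ q.2.1) ∩ Finset.Ioo k j, q.1⟩)
      (fun q => ⟨q.2, (q.1.filter (fun a => q.2 < a), q.1.filter (fun a => a < q.2))⟩)
      ?_ ?_ ?_ ?_ ?_
    · rintro ⟨i, T, S⟩ ha
      simp only [Finset.mem_sigma, Finset.mem_powerset, Finset.mem_product, Finset.mem_Icc] at ha ⊢
      obtain ⟨⟨hik, hij⟩, hT, hS⟩ := ha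
      refine ⟨Finset.inter_subset_right, ?_⟩
      simp only [Finset.mem_insert, Finset.mem_inter, Finset.mem_union, Finset.mem_Ioo,
        eq_self_iff_true, true_or, true_and]
      omega
    · rintro ⟨U, r⟩ hq
      simp only [Finset.mem_sigma, Finset.mem_powerset, Finset.mem_insert] at hq
      obtain ⟨hU, hr⟩ := hq
      simp only [Finset.mem_sigma, Finset.mem_powerset, Finset.mem_product, Finset.mem_Icc]
      have hrIcc : k ≤ r ∧ r ≤ j := by
        rcases hr with rfl | rfl | hrU
        · exact ⟨le_rfl, hkj.le⟩
        · exact ⟨hkj.le, le_rfl⟩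
        · have := Finset.mem_Ioo.mp (hU hrU); omega
      refine ⟨hrIcc, ?_, ?_⟩
      · intro a ha
        simp only [Finset.mem_filter] at ha
        have := Finset.mem_Ioo.mp (hU ha.1)
        simp only [Finset.mem_Ioo]; omega
      · intro a ha
        simp only [Finset.mem_filter] at ha
        have := Finset.mem_Ioo.mp (hU ha.1)
        simp only [Finset.mem_Ioo]; omega
    · rintro ⟨i, T, S⟩ ha
      simp only [Finset.mem_sigma, Finset.mem_powerset, Finset.mem_product, Finset.mem_Icc] at ha
      obtain ⟨⟨hik, hij⟩, hT, hS⟩ := ha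
      dsimp only
      have hA : (insert i (S ∪ T) ∩ Finset.Ioo k j).filter (fun a => i < a) = T := by
        ext a
        simp only [Finset.mem_filter, Finset.mem_inter, Finset.mem_insert, Finset.mem_union,
          Finset.mem_Ioo]
        constructor
        · rintro ⟨⟨(rfl | hA | hA), hk2, hj2⟩, hia⟩
          · exact absurd hia (lt_irrefl _)
          · have := Finset.mem_Ioo.mp (hS hA); exact absurd hia (by omega)
          · exact hA
        · intro haT
          have := Finset.mem_Ioo.mp (hT haT)
          exact ⟨⟨Or.inr (Or.inr haT), by omega, this.2⟩, this.1⟩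
      have hB : (insert i (S ∪ T) ∩ Finset.Ioo k j).filter (fun a => a < i) = S := by
        ext a
        simp only [Finset.mem_filter, Finset.mem_inter, Finset.mem_insert, Finset.mem_union,
          Finset.mem_Ioo]
        constructor
        · rintro ⟨⟨(rfl | hA | hA), hk2, hj2⟩, hia⟩
          · exact absurd hia (lt_irrefl _)
          · exact hA
          · have := Finset.mem_Ioo.mp (hT hA); exact absurd hia (by omega)
        · intro haS
          have := Finset.mem_Ioo.mp (hS haS)
          exact ⟨⟨Or.inr (Or.inl haS), this.1, by omega⟩, this.2⟩
      rw [hA, hB]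
    · rintro ⟨U, r⟩ hq
      simp only [Finset.mem_sigma, Finset.mem_powerset, Finset.mem_insert] at hq
      obtain ⟨hU, hr⟩ := hq
      dsimp only
      have hU' : insert r (U.filter (fun a => a < r) ∪ U.filter (fun a => r < a)) ∩
          Finset.Ioo k j = U := by
        ext a
        simp only [Finset.mem_inter, Finset.mem_insert, Finset.mem_union, Finset.mem_filter,
          Finset.mem_Ioo]
        constructor
        · rintro ⟨(rfl | hA | hA), hk2, hj2⟩
          · rcases hr with rfl | rfl | hrU
            · exact absurd hk2 (lt_irrefl _)
            · exact absurd hj2 (lt_irrefl _)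
            · exact hrU
          · exact hA.1
          · exact hA.1
        · intro haU
          have h3 := Finset.mem_Ioo.mp (hU haU)
          refine ⟨?_, h3.1, h3.2⟩
          rcases lt_trichotomy a r with h | h | h
          · exact Or.inr (Or.inl ⟨haU, h⟩)
          · exact Or.inl h
          · exact Or.inr (Or.inr ⟨haU, h⟩)
      rw [hU']
    · rintro ⟨i, T, S⟩ ha
      simp only [Finset.mem_sigma, Finset.mem_powerset, Finset.mem_product, Finset.mem_Icc] at ha
      obtain ⟨⟨hik, hij⟩, hT, hS⟩ := ha
      have E1 : (insert k (insert j (insert i (S ∪ T) ∩ Finset.Ioo k j))).filter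
          (fun v => i ≤ v) = insert i (insert j T) := by
        ext a
        simp only [Finset.mem_filter, Finset.mem_insert, Finset.mem_inter, Finset.mem_union,
          Finset.mem_Ioo]
        constructor
        · rintro ⟨(rfl | rfl | ⟨(rfl | hA | hA), hk2, hj2⟩), hia⟩
          · exact Or.inl (by omega)
          · exact Or.inr (Or.inl rfl)
          · exact Or.inl rfl
          · have := Finset.mem_Ioo.mp (hS hA); exact absurd hia (by omega)
          · exact Or.inr (Or.inr hA)
        · rintro (rfl | rfl | hA)
          · exact ⟨by omega, le_rfl⟩
          · exact ⟨Or.inr (Or.inl rfl), hij⟩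
          · have := Finset.mem_Ioo.mp (hT hA)
            exact ⟨Or.inr (Or.inr ⟨Or.inr (Or.inr hA), by omega, this.2⟩), this.1.le⟩
      have E2 : (insert k (insert j (insert i (S ∪ T) ∩ Finset.Ioo k j))).filter
          (fun v => v ≤ i) = insert k (insert i S) := by
        ext a
        simp only [Finset.mem_filter, Finset.mem_insert, Finset.mem_inter, Finset.mem_union,
          Finset.mem_Ioo]
        constructor
        · rintro ⟨(rfl | rfl | ⟨(rfl | hA | hA), hk2, hj2⟩), hia⟩
          · exact Or.inl rfl
          · exact Or.inr (Or.inl (by omega))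
          · exact Or.inr (Or.inl rfl)
          · exact Or.inr (Or.inr hA)
          · have := Finset.mem_Ioo.mp (hT hA); exact absurd hia (by omega)
        · rintro (rfl | rfl | hA)
          · exact ⟨Or.inl rfl, hik⟩
          · exact ⟨by omega, le_rfl⟩
          · have := Finset.mem_Ioo.mp (hS hA)
            exact ⟨Or.inr (Or.inr ⟨Or.inr (Or.inl hA), this.1, by omega⟩), this.2.le⟩
      show _ = consecPairsProd _ (Finset.sort (Finset.filter _ _) _) *
        consecPairsProd _ (Finset.sort (Finset.filter _ _) _)
      rw [E1, E2]
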